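/- For all real numbers p and s with 1 ≤ s ≤ p + 1, define Φ₁(s,p) := (2p+1)^{−1/2}·[ (Γ(p+2−s)/Γ(p+s))^{1/2} + (Γ(p+3−s)/Γ(p+1+s))^{1/2} ] + ( (Γ(p+2−s)/Γ(p+2+s)) · (Γ(p+3−s)/Γ(p+1+s)) )^{1/4} + (Γ(p+2−s)/Γ(p+2+s))^{1/2}, where Γ is the Gamma function. Then Φ₁(s,p)² ≤ 16 · Γ(p+2−s)/Γ(p+s+1). -/

import Mathlib

set_option maxHeartbeats 1000000 in
/-- Simplification of the hp-projection trace constant: for `1 ≤ s ≤ p+1`,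
`Φ₁(s,p)² ≤ 16·Γ(p+2−s)/Γ(p+s+1)`, where
`Φ₁(s,p) = (2p+1)^{−1/2}[(Γ(p+2−s)/Γ(p+s))^{1/2} + (Γ(p+3−s)/Γ(p+1+s))^{1/2}]
 + ((Γ(p+2−s)/Γ(p+2+s))·(Γ(p+3−s)/Γ(p+1+s)))^{1/4} + (Γ(p+2−s)/Γ(p+2+s))^{1/2}`. -/
theorem hp_trace_constant_bound (p s : ℝ) (h1 : 1 ≤ s) (h2 : s ≤ p + 1) :
    ((2 * p + 1) ^ (-(1 / 2) : ℝ) *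
          (Real.sqrt (Real.Gamma (p + 2 - s) / Real.Gamma (p + s)) +
            Real.sqrt (Real.Gamma (p + 3 - s) / Real.Gamma (p + 1 + s))) +
        ((Real.Gamma (p + 2 - s) / Real.Gamma (p + 2 + s)) *
            (Real.Gamma (p + 3 - s) / Real.Gamma (p + 1 + s))) ^ ((1 : ℝ) / 4) +
        Real.sqrt (Real.Gamma (p + 2 - s) / Real.Gamma (p + 2 + s))) ^ 2 ≤
      16 * (Real.Gamma (p + 2 - s) / Real.Gamma (p + s + 1)) := by
  have hp0 : (0:ℝ) ≤ p := by linarith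
  have hps : (1:ℝ) ≤ p + s := by linarith
  have ha1 : (1:ℝ) ≤ p + 2 - s := by linarith
  have hA : 0 < Real.Gamma (p + 2 - s) := Real.Gamma_pos_of_pos (by linarith)
  have hB : 0 < Real.Gamma (p + s) := Real.Gamma_pos_of_pos (by linarith)
  have hB1 : 0 < Real.Gamma (p + s + 1) := Real.Gamma_pos_of_pos (by linarith)
  have e1 : Real.Gamma (p + s + 1) = (p + s) * Real.Gamma (p + s) :=
    Real.Gamma_add_one (by linarith)
  have e2 : Real.Gamma (p + 1 + s) = Real.Gamma (p + s + 1) := by ring_nf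
  have e3 : Real.Gamma (p + 2 + s) = (p + s + 1) * Real.Gamma (p + s + 1) := by
    have h : p + 2 + s = (p + s + 1) + 1 := by ring
    rw [h, Real.Gamma_add_one (by linarith)]
  have e4 : Real.Gamma (p + 3 - s) = (p + 2 - s) * Real.Gamma (p + 2 - s) := by
    have h : p + 3 - s = (p + 2 - s) + 1 := by ring
    rw [h, Real.Gamma_add_one (by linarith)]
  set X := Real.Gamma (p + 2 - s) / Real.Gamma (p + s + 1) with hXdef
  have hX : 0 < X := div_pos hA hB1
  clear_value X
  have r1 : Real.Gamma (p + 2 - s) / Real.Gamma (p + s) = (p + s) * X := by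
    rw [hXdef, e1]; field_simp
  have r2 : Real.Gamma (p + 3 - s) / Real.Gamma (p + 1 + s) = (p + 2 - s) * X := by
    rw [e4, e2, hXdef, mul_div_assoc]
  have r3 : Real.Gamma (p + 2 - s) / Real.Gamma (p + 2 + s) = X / (p + s + 1) := by
    rw [e3, hXdef]
    field_simp
  rw [r1, r2, r3]
  have hsX : (0:ℝ) ≤ Real.sqrt X := Real.sqrt_nonneg X
  -- first bracket
  have hb1 : Real.sqrt ((p + s) * X) ≤ Real.sqrt (2 * p + 1) * Real.sqrt X := by
    rw [← Real.sqrt_mul (by linarith)]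
    exact Real.sqrt_le_sqrt (by nlinarith [hX.le])
  have hb2 : Real.sqrt ((p + 2 - s) * X) ≤ Real.sqrt (2 * p + 1) * Real.sqrt X := by
    rw [← Real.sqrt_mul (by linarith)]
    exact Real.sqrt_le_sqrt (by nlinarith [hX.le])
  have hsp : 0 < Real.sqrt (2 * p + 1) := Real.sqrt_pos.mpr (by linarith)
  have hrp : (2 * p + 1 : ℝ) ^ (-(1 / 2) : ℝ) = (Real.sqrt (2 * p + 1))⁻¹ := by
    rw [Real.rpow_neg (by linarith), Real.sqrt_eq_rpow]
  have hT1 : (2 * p + 1 : ℝ) ^ (-(1 / 2) : ℝ) *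
      (Real.sqrt ((p + s) * X) + Real.sqrt ((p + 2 - s) * X)) ≤ 2 * Real.sqrt X := by
    rw [hrp]
    have h : Real.sqrt ((p + s) * X) + Real.sqrt ((p + 2 - s) * X)
        ≤ Real.sqrt (2 * p + 1) * (2 * Real.sqrt X) := by nlinarith
    calc (Real.sqrt (2 * p + 1))⁻¹ *
        (Real.sqrt ((p + s) * X) + Real.sqrt ((p + 2 - s) * X))
        ≤ (Real.sqrt (2 * p + 1))⁻¹ * (Real.sqrt (2 * p + 1) * (2 * Real.sqrt X)) := by
          apply mul_le_mul_of_nonneg_left h (by positivity)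
      _ = 2 * Real.sqrt X := by field_simp
  have hT2 : (X / (p + s + 1) * ((p + 2 - s) * X)) ^ ((1:ℝ) / 4) ≤ Real.sqrt X := by
    have hle : X / (p + s + 1) * ((p + 2 - s) * X) ≤ X ^ 2 := by
      have h1' : X / (p + s + 1) * ((p + 2 - s) * X) = X ^ 2 * ((p + 2 - s) / (p + s + 1)) := by
        field_simp
      have h2' : (p + 2 - s) / (p + s + 1) ≤ 1 :=
        (div_le_one (by linarith)).mpr (by linarith)
      rw [h1']
      nlinarith [sq_nonneg X]
    have hsq : (X ^ 2 : ℝ) ^ ((1:ℝ) / 4) = Real.sqrt X := by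
      rw [Real.sqrt_eq_rpow, ← Real.rpow_natCast X 2, ← Real.rpow_mul hX.le]
      norm_num
    calc (X / (p + s + 1) * ((p + 2 - s) * X)) ^ ((1:ℝ) / 4)
        ≤ (X ^ 2 : ℝ) ^ ((1:ℝ) / 4) := by
          apply Real.rpow_le_rpow (by positivity) hle (by norm_num)
      _ = Real.sqrt X := hsq
  have hT3 : Real.sqrt (X / (p + s + 1)) ≤ Real.sqrt X := by
    apply Real.sqrt_le_sqrt
    rw [div_le_iff₀ (by linarith)]
    nlinarith [hX.le]
  have hsum : (2 * p + 1 : ℝ) ^ (-(1 / 2) : ℝ) *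
      (Real.sqrt ((p + s) * X) + Real.sqrt ((p + 2 - s) * X)) +
      (X / (p + s + 1) * ((p + 2 - s) * X)) ^ ((1:ℝ) / 4) +
      Real.sqrt (X / (p + s + 1)) ≤ 4 * Real.sqrt X := by linarith
  have hnn : (0:ℝ) ≤ (2 * p + 1 : ℝ) ^ (-(1 / 2) : ℝ) *
      (Real.sqrt ((p + s) * X) + Real.sqrt ((p + 2 - s) * X)) +
      (X / (p + s + 1) * ((p + 2 - s) * X)) ^ ((1:ℝ) / 4) +
      Real.sqrt (X / (p + s + 1)) := by positivity
  calc ((2 * p + 1 : ℝ) ^ (-(1 / 2) : ℝ) *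
      (Real.sqrt ((p + s) * X) + Real.sqrt ((p + 2 - s) * X)) +
      (X / (p + s + 1) * ((p + 2 - s) * X)) ^ ((1:ℝ) / 4) +
      Real.sqrt (X / (p + s + 1))) ^ 2
      ≤ (4 * Real.sqrt X) ^ 2 := by
        apply pow_le_pow_left₀ hnn hsum
    _ = 16 * X := by
        rw [mul_pow, Real.sq_sqrt hX.le]; norm_num
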